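/- For m ≥ 1, the word q₁q₂q₃ represents the book graph B_m permutationally, where on vertex set {0,1,…,m} ∪ {0′,1′,…,m′}: q₁ = 0′ 1 1′ 2 2′ ⋯ m m′ 0, q₂ = 0′ m m′ (m−1)(m−1)′ ⋯ 1 1′ 0, q₃ = 1 2 ⋯ m 0′ 0 m′ (m−1)′ ⋯ 1′. -/

import Mathlib

attribute [local instance 2000] instBEqOfDecidableEq
set_option linter.unreachableTactic false
set_option linter.unusedTactic false
set_option linter.unusedVariables false

def Alternates {V : Type*} [DecidableEq V] (w : List V) (a b : V) : Prop :=
  (w.filter fun x => decide (x = a ∨ x = b)).Chain' (· ≠ ·)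

def Represents {V : Type*} [DecidableEq V] (w : List V) (G : SimpleGraph V) : Prop :=
  ∀ a b : V, a ≠ b → (G.Adj a b ↔ Alternates w a b)

def IsPermList {V : Type*} (p : List V) : Prop :=
  p.Nodup ∧ ∀ x : V, x ∈ p

def Precedes {V : Type*} [DecidableEq V] (p : List V) (a b : V) : Prop :=
  p.idxOf a < p.idxOf b

def bookGraph (m : ℕ) : SimpleGraph (Fin (m + 1) ⊕ Fin (m + 1)) :=
  SimpleGraph.fromRel fun a b =>
    (a = Sum.inl 0 ∧ ∃ i, b = Sum.inl i) ∨
    (a = Sum.inr 0 ∧ ∃ i, b = Sum.inr i) ∨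
    (∃ i, a = Sum.inl i ∧ b = Sum.inr i)

open Fin.NatCast

section general
variable {V : Type*} [DecidableEq V] {p : List V} {a b : V}

lemma indexOf_ne (hab : a ≠ b) (ha : a ∈ p) : p.idxOf a ≠ p.idxOf b := by
  intro h
  have h1 : p.idxOf a < p.length := List.idxOf_lt_length_iff.2 ha
  have h2 := List.idxOf_get h1
  have h3 : p.idxOf b < p.length := h ▸ h1
  have h4 := List.idxOf_get h3
  apply hab
  rw [← h2, ← h4]
  congr 1
  exact Fin.ext h

lemma filter_nil_of_not_mem (ha : a ∉ p) (hb : b ∉ p) :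
    p.filter (fun x => decide (x = a ∨ x = b)) = [] := by
  rw [List.filter_eq_nil_iff]
  rintro x hx
  simp only [decide_eq_true_eq, not_or]
  exact ⟨fun h => ha (h ▸ hx), fun h => hb (h ▸ hx)⟩

lemma filter_single (hn : p.Nodup) (ha : a ∉ p) (hb : b ∈ p) :
    p.filter (fun x => decide (x = a ∨ x = b)) = [b] := by
  induction p with
  | nil => simp at hb
  | cons x t ih =>
    rw [List.nodup_cons] at hn
    rcases List.mem_cons.1 hb with h | h
    · subst h
      rw [List.filter_cons_of_pos (by simp)]
      rw [filter_nil_of_not_mem (fun h => ha (List.mem_cons_of_mem _ h)) hn.1]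
    · have hxa : x ≠ a := fun h => ha (h ▸ List.mem_cons_self)
      have hxb : x ≠ b := fun he => hn.1 (he ▸ h)
      rw [List.filter_cons_of_neg (by simp [hxa, hxb])]
      exact ih hn.2 (fun h => ha (List.mem_cons_of_mem _ h)) h

lemma filter_pair (hab : a ≠ b) (hn : p.Nodup) (ha : a ∈ p) (hb : b ∈ p) :
    p.filter (fun x => decide (x = a ∨ x = b)) =
      if p.idxOf a < p.idxOf b then [a, b] else [b, a] := by
  induction p with
  | nil => simp at ha
  | cons x t ih =>
    rw [List.nodup_cons] at hn
    by_cases hxa : x = a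
    · subst hxa
      have hat : x ∉ t := hn.1
      have hbt : b ∈ t := by
        rcases List.mem_cons.1 hb with h | h
        · exact absurd h.symm hab
        · exact h
      rw [List.filter_cons_of_pos (by simp), filter_single hn.2 hat hbt]
      rw [List.idxOf_cons_self, List.idxOf_cons_ne _ hab]
      simp
    · by_cases hxb : x = b
      · subst hxb
        have hbt : x ∉ t := hn.1
        have hat : a ∈ t := by
          rcases List.mem_cons.1 ha with h | h
          · exact absurd h.symm hxa
          · exact h
        have : t.filter (fun y => decide (y = a ∨ y = x)) = [a] := by
          have := filter_single (a := x) (b := a) hn.2 hbt hat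
          rw [← this]
          apply List.filter_congr
          intro y _
          simp [or_comm]
        rw [List.filter_cons_of_pos (by simp), this]
        rw [List.idxOf_cons_self, List.idxOf_cons_ne _ hxa]
        simp
      · have hat : a ∈ t := by
          rcases List.mem_cons.1 ha with h | h
          · exact absurd h.symm hxa
          · exact h
        have hbt : b ∈ t := by
          rcases List.mem_cons.1 hb with h | h
          · exact absurd h.symm hxb
          · exact h
        rw [List.filter_cons_of_neg (by simp [hxa, hxb]),
          List.idxOf_cons_ne _ hxa, List.idxOf_cons_ne _ hxb,
          ih hn.2 hat hbt]
        simp [Nat.succ_lt_succ_iff]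

lemma alt_iff {p1 p2 p3 : List V} (hab : a ≠ b)
    (h1 : p1.Nodup) (h2 : p2.Nodup) (h3 : p3.Nodup)
    (ha1 : a ∈ p1) (hb1 : b ∈ p1) (ha2 : a ∈ p2) (hb2 : b ∈ p2)
    (ha3 : a ∈ p3) (hb3 : b ∈ p3) :
    Alternates (p1 ++ p2 ++ p3) a b ↔
      ((Precedes p1 a b ∧ Precedes p2 a b ∧ Precedes p3 a b) ∨
       (Precedes p1 b a ∧ Precedes p2 b a ∧ Precedes p3 b a)) := by
  have e1 := indexOf_ne hab ha1
  have e2 := indexOf_ne hab ha2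
  have e3 := indexOf_ne hab ha3
  unfold Alternates Precedes
  rw [List.filter_append, List.filter_append,
    filter_pair hab h1 ha1 hb1, filter_pair hab h2 ha2 hb2, filter_pair hab h3 ha3 hb3]
  split_ifs with c1 c2 c3 c3' c2' c3'' c3''' <;>
    simp [List.Chain', List.isChain_cons_cons, hab, hab.symm] <;> omega

end general

lemma flatMap_range_split {α : Type*} (f : ℕ → List α) {n N : ℕ} (h : n ≤ N) :
    (List.range N).flatMap f =
      (List.range n).flatMap f ++ (List.range (N - n)).flatMap (fun k => f (n + k)) := by
  conv_lhs => rw [show N = n + (N - n) by omega]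
  rw [List.range_add, List.flatMap_append, List.flatMap_map]

lemma map_range_split {α : Type*} (f : ℕ → α) {n N : ℕ} (h : n ≤ N) :
    (List.range N).map f =
      (List.range n).map f ++ (List.range (N - n)).map (fun k => f (n + k)) := by
  conv_lhs => rw [show N = n + (N - n) by omega]
  rw [List.range_add, List.map_append, List.map_map]
  rfl

section words
variable {m : ℕ}

def B1 (m n : ℕ) : List (Fin (m+1) ⊕ Fin (m+1)) :=
  (List.range n).flatMap fun k =>
    [Sum.inl ((k + 1 : ℕ) : Fin (m + 1)), Sum.inr ((k + 1 : ℕ) : Fin (m + 1))]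

def B2 (m n : ℕ) : List (Fin (m+1) ⊕ Fin (m+1)) :=
  (List.range n).flatMap fun k =>
    [Sum.inl ((m - k : ℕ) : Fin (m + 1)), Sum.inr ((m - k : ℕ) : Fin (m + 1))]

def G1 (m n : ℕ) : List (Fin (m+1) ⊕ Fin (m+1)) :=
  (List.range n).map fun k => Sum.inl ((k + 1 : ℕ) : Fin (m + 1))

def G2 (m n : ℕ) : List (Fin (m+1) ⊕ Fin (m+1)) :=
  (List.range n).map fun k => Sum.inr ((m - k : ℕ) : Fin (m + 1))

def Q1 (m : ℕ) : List (Fin (m+1) ⊕ Fin (m+1)) := Sum.inr 0 :: (B1 m m ++ [Sum.inl 0])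
def Q2 (m : ℕ) : List (Fin (m+1) ⊕ Fin (m+1)) := Sum.inr 0 :: (B2 m m ++ [Sum.inl 0])
def Q3 (m : ℕ) : List (Fin (m+1) ⊕ Fin (m+1)) := G1 m m ++ [Sum.inr 0, Sum.inl 0] ++ G2 m m

lemma vcast {k : ℕ} (h : k ≤ m) : ((k : Fin (m+1)) : ℕ) = k :=
  Fin.val_cast_of_lt (by omega)

lemma mem_B1_inl {n : ℕ} (hn : n ≤ m) {c : Fin (m+1)} :
    Sum.inl c ∈ B1 m n ↔ 1 ≤ c.val ∧ c.val ≤ n := by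
  simp only [B1, List.mem_flatMap, List.mem_range, List.mem_cons, List.not_mem_nil, or_false,
    false_or, Sum.inl.injEq, reduceCtorEq]
  constructor
  · rintro ⟨k, hk, h⟩
    subst h; rw [vcast (by omega)]; omega
  · rintro ⟨h1, h2⟩
    refine ⟨c.val - 1, by omega, ?_⟩
    rw [show c.val - 1 + 1 = c.val by omega, Fin.cast_val_eq_self]

lemma mem_B1_inr {n : ℕ} (hn : n ≤ m) {c : Fin (m+1)} :
    Sum.inr c ∈ B1 m n ↔ 1 ≤ c.val ∧ c.val ≤ n := by
  simp only [B1, List.mem_flatMap, List.mem_range, List.mem_cons, List.not_mem_nil, or_false,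
    false_or, Sum.inr.injEq, reduceCtorEq]
  constructor
  · rintro ⟨k, hk, h⟩
    subst h; rw [vcast (by omega)]; omega
  · rintro ⟨h1, h2⟩
    refine ⟨c.val - 1, by omega, ?_⟩
    rw [show c.val - 1 + 1 = c.val by omega, Fin.cast_val_eq_self]

lemma mem_B2_inl {n : ℕ} (hn : n ≤ m) {c : Fin (m+1)} :
    Sum.inl c ∈ B2 m n ↔ m - n < c.val ∧ c.val ≤ m := by
  simp only [B2, List.mem_flatMap, List.mem_range, List.mem_cons, List.not_mem_nil, or_false,
    false_or, Sum.inl.injEq, reduceCtorEq]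
  constructor
  · rintro ⟨k, hk, h⟩
    subst h; rw [vcast (by omega)]; omega
  · rintro ⟨h1, h2⟩
    refine ⟨m - c.val, by omega, ?_⟩
    rw [show m - (m - c.val) = c.val by omega, Fin.cast_val_eq_self]

lemma mem_B2_inr {n : ℕ} (hn : n ≤ m) {c : Fin (m+1)} :
    Sum.inr c ∈ B2 m n ↔ m - n < c.val ∧ c.val ≤ m := by
  simp only [B2, List.mem_flatMap, List.mem_range, List.mem_cons, List.not_mem_nil, or_false,
    false_or, Sum.inr.injEq, reduceCtorEq]
  constructor
  · rintro ⟨k, hk, h⟩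
    subst h; rw [vcast (by omega)]; omega
  · rintro ⟨h1, h2⟩
    refine ⟨m - c.val, by omega, ?_⟩
    rw [show m - (m - c.val) = c.val by omega, Fin.cast_val_eq_self]

lemma mem_G1 {n : ℕ} (hn : n ≤ m) {c : Fin (m+1)} :
    Sum.inl c ∈ G1 m n ↔ 1 ≤ c.val ∧ c.val ≤ n := by
  simp only [G1, List.mem_map, List.mem_range, Sum.inl.injEq]
  constructor
  · rintro ⟨k, hk, h⟩
    subst h; rw [vcast (by omega)]; omega
  · rintro ⟨h1, h2⟩
    refine ⟨c.val - 1, by omega, ?_⟩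
    rw [show c.val - 1 + 1 = c.val by omega, Fin.cast_val_eq_self]

lemma not_mem_G1_inr {n : ℕ} {c : Fin (m+1)} : Sum.inr c ∉ G1 m n := by simp [G1]

lemma not_mem_G2_inl {n : ℕ} {c : Fin (m+1)} : Sum.inl c ∉ G2 m n := by simp [G2]

lemma mem_G2 {n : ℕ} (hn : n ≤ m) {c : Fin (m+1)} :
    Sum.inr c ∈ G2 m n ↔ m - n < c.val ∧ c.val ≤ m := by
  simp only [G2, List.mem_map, List.mem_range, Sum.inr.injEq]
  constructor
  · rintro ⟨k, hk, h⟩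
    subst h; rw [vcast (by omega)]; omega
  · rintro ⟨h1, h2⟩
    refine ⟨m - c.val, by omega, ?_⟩
    rw [show m - (m - c.val) = c.val by omega, Fin.cast_val_eq_self]

lemma len_B1 (n : ℕ) : (B1 m n).length = 2 * n := by
  induction n with
  | zero => simp [B1]
  | succ k ih => rw [B1, List.range_succ, List.flatMap_append] at *; simp at *; omega

lemma len_B2 (n : ℕ) : (B2 m n).length = 2 * n := by
  induction n with
  | zero => simp [B2]
  | succ k ih => rw [B2, List.range_succ, List.flatMap_append] at *; simp at *; omega

lemma len_G1 (n : ℕ) : (G1 m n).length = n := by simp [G1]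
lemma len_G2 (n : ℕ) : (G2 m n).length = n := by simp [G2]

lemma B1_split {i : ℕ} (h1 : 1 ≤ i) (h2 : i ≤ m) :
    ∃ t : List (Fin (m+1) ⊕ Fin (m+1)),
      B1 m m = B1 m (i - 1) ++ (Sum.inl (i : Fin (m+1)) :: Sum.inr (i : Fin (m+1)) :: t) := by
  have h := flatMap_range_split
    (f := fun k => ([Sum.inl ((k + 1 : ℕ) : Fin (m + 1)),
      Sum.inr ((k + 1 : ℕ) : Fin (m + 1))] : List (Fin (m+1) ⊕ Fin (m+1))))
    (show i - 1 ≤ m by omega)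
  rw [show m - (i - 1) = (m - i) + 1 by omega, List.range_succ_eq_map] at h
  simp only [List.flatMap_cons, List.flatMap_map] at h
  rw [show i - 1 + 0 + 1 = i by omega] at h
  exact ⟨_, h⟩

lemma B2_split {i : ℕ} (h1 : 1 ≤ i) (h2 : i ≤ m) :
    ∃ t : List (Fin (m+1) ⊕ Fin (m+1)),
      B2 m m = B2 m (m - i) ++ (Sum.inl (i : Fin (m+1)) :: Sum.inr (i : Fin (m+1)) :: t) := by
  have h := flatMap_range_split
    (f := fun k => ([Sum.inl ((m - k : ℕ) : Fin (m + 1)),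
      Sum.inr ((m - k : ℕ) : Fin (m + 1))] : List (Fin (m+1) ⊕ Fin (m+1))))
    (show m - i ≤ m by omega)
  rw [show m - (m - i) = (i - 1) + 1 by omega, List.range_succ_eq_map] at h
  simp only [List.flatMap_cons, List.flatMap_map] at h
  rw [show m - (m - i + 0) = i by omega] at h
  exact ⟨_, h⟩

lemma G1_split {i : ℕ} (h1 : 1 ≤ i) (h2 : i ≤ m) :
    ∃ t : List (Fin (m+1) ⊕ Fin (m+1)),
      G1 m m = G1 m (i - 1) ++ (Sum.inl (i : Fin (m+1)) :: t) := by
  have h := map_range_split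
    (f := fun k => (Sum.inl ((k + 1 : ℕ) : Fin (m + 1)) : Fin (m+1) ⊕ Fin (m+1)))
    (show i - 1 ≤ m by omega)
  rw [show m - (i - 1) = (m - i) + 1 by omega, List.range_succ_eq_map] at h
  simp only [List.map_cons, List.map_map] at h
  rw [show i - 1 + 0 + 1 = i by omega] at h
  exact ⟨_, h⟩

lemma G2_split {i : ℕ} (h1 : 1 ≤ i) (h2 : i ≤ m) :
    ∃ t : List (Fin (m+1) ⊕ Fin (m+1)),
      G2 m m = G2 m (m - i) ++ (Sum.inr (i : Fin (m+1)) :: t) := by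
  have h := map_range_split
    (f := fun k => (Sum.inr ((m - k : ℕ) : Fin (m + 1)) : Fin (m+1) ⊕ Fin (m+1)))
    (show m - i ≤ m by omega)
  rw [show m - (m - i) = (i - 1) + 1 by omega, List.range_succ_eq_map] at h
  simp only [List.map_cons, List.map_map] at h
  rw [show m - (m - i + 0) = i by omega] at h
  exact ⟨_, h⟩


section idx
variable {m : ℕ}

lemma fin_pos {i : Fin (m+1)} (h : i ≠ 0) : 1 ≤ i.val :=
  Nat.pos_of_ne_zero (fun h0 => h (Fin.ext (by simp [h0])))

lemma idx1_R0 : (Q1 m).idxOf (Sum.inr 0) = 0 := List.idxOf_cons_self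

lemma idx1_L0 : (Q1 m).idxOf (Sum.inl 0) = 2 * m + 1 := by
  rw [Q1, List.idxOf_cons_ne _ (by simp),
    List.idxOf_append_of_notMem (by simp [mem_B1_inl (le_refl m)]),
    List.idxOf_cons_self, len_B1]

lemma idx1_L {i : Fin (m+1)} (h : i ≠ 0) :
    (Q1 m).idxOf (Sum.inl i) = 2 * i.val - 1 := by
  have hv1 : 1 ≤ i.val := fin_pos h
  have hv2 : i.val ≤ m := by have := i.isLt; omega
  have h0 : ((0 : Fin (m+1)) : ℕ) = 0 := rfl
  obtain ⟨t, ht⟩ := B1_split hv1 hv2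
  rw [Fin.cast_val_eq_self] at ht
  rw [Q1, List.idxOf_cons_ne _ (by simp), ht, List.append_assoc,
    List.idxOf_append_of_notMem (by simp [mem_B1_inl (show i.val - 1 ≤ m by omega)]; omega),
    List.cons_append, List.idxOf_cons_self, len_B1]
  omega

lemma idx1_R {i : Fin (m+1)} (h : i ≠ 0) :
    (Q1 m).idxOf (Sum.inr i) = 2 * i.val := by
  have hv1 : 1 ≤ i.val := fin_pos h
  have hv2 : i.val ≤ m := by have := i.isLt; omega
  have h0 : ((0 : Fin (m+1)) : ℕ) = 0 := rfl
  obtain ⟨t, ht⟩ := B1_split hv1 hv2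
  rw [Fin.cast_val_eq_self] at ht
  rw [Q1, List.idxOf_cons_ne _ (by simp [Ne.symm h]), ht, List.append_assoc,
    List.idxOf_append_of_notMem (by simp [mem_B1_inr (show i.val - 1 ≤ m by omega)]; omega),
    List.cons_append, List.idxOf_cons_ne _ (by simp), List.cons_append,
    List.idxOf_cons_self, len_B1]
  omega

lemma idx2_R0 : (Q2 m).idxOf (Sum.inr 0) = 0 := List.idxOf_cons_self

lemma idx2_L0 : (Q2 m).idxOf (Sum.inl 0) = 2 * m + 1 := by
  rw [Q2, List.idxOf_cons_ne _ (by simp),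
    List.idxOf_append_of_notMem (by simp [mem_B2_inl (le_refl m)]),
    List.idxOf_cons_self, len_B2]

lemma idx2_L {i : Fin (m+1)} (h : i ≠ 0) :
    (Q2 m).idxOf (Sum.inl i) = 2 * (m - i.val) + 1 := by
  have hv1 : 1 ≤ i.val := fin_pos h
  have hv2 : i.val ≤ m := by have := i.isLt; omega
  obtain ⟨t, ht⟩ := B2_split hv1 hv2
  rw [Fin.cast_val_eq_self] at ht
  rw [Q2, List.idxOf_cons_ne _ (by simp), ht, List.append_assoc,
    List.idxOf_append_of_notMem (by simp [mem_B2_inl (show m - i.val ≤ m by omega)]; omega),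
    List.cons_append, List.idxOf_cons_self, len_B2]
  all_goals omega

lemma idx2_R {i : Fin (m+1)} (h : i ≠ 0) :
    (Q2 m).idxOf (Sum.inr i) = 2 * (m - i.val) + 2 := by
  have hv1 : 1 ≤ i.val := fin_pos h
  have hv2 : i.val ≤ m := by have := i.isLt; omega
  obtain ⟨t, ht⟩ := B2_split hv1 hv2
  rw [Fin.cast_val_eq_self] at ht
  rw [Q2, List.idxOf_cons_ne _ (by simp [Ne.symm h]), ht, List.append_assoc,
    List.idxOf_append_of_notMem (by simp [mem_B2_inr (show m - i.val ≤ m by omega)]; omega),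
    List.cons_append, List.idxOf_cons_ne _ (by simp), List.cons_append,
    List.idxOf_cons_self, len_B2]
  all_goals omega

lemma idx3_R0 : (Q3 m).idxOf (Sum.inr 0) = m := by
  rw [Q3, List.append_assoc,
    List.idxOf_append_of_notMem not_mem_G1_inr, List.cons_append,
    List.idxOf_cons_self, len_G1]
  all_goals omega

lemma idx3_L0 : (Q3 m).idxOf (Sum.inl 0) = m + 1 := by
  rw [Q3, List.append_assoc,
    List.idxOf_append_of_notMem (by simp [mem_G1 (le_refl m)]),
    List.cons_append, List.idxOf_cons_ne _ (by simp), List.cons_append,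
    List.idxOf_cons_self, len_G1]
  all_goals omega

lemma idx3_L {i : Fin (m+1)} (h : i ≠ 0) :
    (Q3 m).idxOf (Sum.inl i) = i.val - 1 := by
  have hv1 : 1 ≤ i.val := fin_pos h
  have hv2 : i.val ≤ m := by have := i.isLt; omega
  have h0 : ((0 : Fin (m+1)) : ℕ) = 0 := rfl
  obtain ⟨t, ht⟩ := G1_split hv1 hv2
  rw [Fin.cast_val_eq_self] at ht
  rw [Q3, List.append_assoc, ht, List.append_assoc,
    List.idxOf_append_of_notMem (by simp [mem_G1 (show i.val - 1 ≤ m by omega)]; omega),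
    List.cons_append, List.idxOf_cons_self, len_G1]
  all_goals omega

lemma idx3_R {i : Fin (m+1)} (h : i ≠ 0) :
    (Q3 m).idxOf (Sum.inr i) = 2 * m + 2 - i.val := by
  have hv1 : 1 ≤ i.val := fin_pos h
  have hv2 : i.val ≤ m := by have := i.isLt; omega
  obtain ⟨t, ht⟩ := G2_split hv1 hv2
  rw [Fin.cast_val_eq_self] at ht
  rw [Q3, List.append_assoc,
    List.idxOf_append_of_notMem not_mem_G1_inr, List.cons_append,
    List.idxOf_cons_ne _ (by simp [Ne.symm h]), List.cons_append,
    List.idxOf_cons_ne _ (by simp), List.nil_append, ht,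
    List.idxOf_append_of_notMem (by simp [mem_G2 (show m - i.val ≤ m by omega)]; omega),
    List.idxOf_cons_self, len_G1, len_G2]
  all_goals omega

end idx
lemma nodup_B1 : ∀ n, n ≤ m → (B1 m n).Nodup := by
  intro n
  induction n with
  | zero => intro _; simp [B1]
  | succ k ih =>
    intro hk
    have hsplit : B1 m (k+1) = B1 m k ++ [Sum.inl ((k+1 : ℕ) : Fin (m+1)),
        Sum.inr ((k+1 : ℕ) : Fin (m+1))] := by
      rw [B1, B1, List.range_succ, List.flatMap_append]; simp
    rw [hsplit, List.nodup_append]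
    refine ⟨ih (by omega), by simp [vcast (show k + 1 ≤ m by omega)], ?_⟩
    rintro x hx _ hx' rfl
    rcases x with c | c
    · rw [mem_B1_inl (by omega)] at hx
      simp only [List.mem_cons, List.not_mem_nil, or_false, Sum.inl.injEq, reduceCtorEq,
        false_or] at hx'
      subst hx'; rw [vcast (by omega)] at hx; omega
    · rw [mem_B1_inr (by omega)] at hx
      simp only [List.mem_cons, List.not_mem_nil, or_false, Sum.inr.injEq, reduceCtorEq,
        false_or] at hx'
      subst hx'; rw [vcast (by omega)] at hx; omega

lemma nodup_B2 : ∀ n, n ≤ m → (B2 m n).Nodup := by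
  intro n
  induction n with
  | zero => intro _; simp [B2]
  | succ k ih =>
    intro hk
    have hsplit : B2 m (k+1) = B2 m k ++ [Sum.inl ((m - k : ℕ) : Fin (m+1)),
        Sum.inr ((m - k : ℕ) : Fin (m+1))] := by
      rw [B2, B2, List.range_succ, List.flatMap_append]; simp
    rw [hsplit, List.nodup_append]
    refine ⟨ih (by omega), by simp [vcast (show m - k ≤ m by omega)], ?_⟩
    rintro x hx _ hx' rfl
    rcases x with c | c
    · rw [mem_B2_inl (by omega)] at hx
      simp only [List.mem_cons, List.not_mem_nil, or_false, Sum.inl.injEq, reduceCtorEq,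
        false_or] at hx'
      subst hx'; rw [vcast (by omega)] at hx; omega
    · rw [mem_B2_inr (by omega)] at hx
      simp only [List.mem_cons, List.not_mem_nil, or_false, Sum.inr.injEq, reduceCtorEq,
        false_or] at hx'
      subst hx'; rw [vcast (by omega)] at hx; omega

lemma nodup_G1 (hn : True) : (G1 m m).Nodup := by
  rw [G1]
  refine List.Nodup.map_on ?_ (List.nodup_range)
  intro x hx y hy hxy
  simp only [List.mem_range] at hx hy
  simp only [Sum.inl.injEq] at hxy
  have := congrArg Fin.val hxy
  rw [vcast (by omega), vcast (by omega)] at this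
  omega

lemma nodup_G2 (hn : True) : (G2 m m).Nodup := by
  rw [G2]
  refine List.Nodup.map_on ?_ (List.nodup_range)
  intro x hx y hy hxy
  simp only [List.mem_range] at hx hy
  simp only [Sum.inr.injEq] at hxy
  have := congrArg Fin.val hxy
  rw [vcast (by omega), vcast (by omega)] at this
  omega

lemma nodup_Q1 : (Q1 m).Nodup := by
  rw [Q1, List.nodup_cons, List.nodup_append]
  refine ⟨?_, nodup_B1 m (le_refl m), by simp, ?_⟩
  · simp only [List.mem_append, mem_B1_inr (le_refl m)]
    simp
  · rintro x hx _ hx' rfl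
    simp only [List.mem_cons, List.not_mem_nil, or_false] at hx'
    subst hx'
    rw [mem_B1_inl (le_refl m)] at hx
    simp at hx

lemma nodup_Q2 : (Q2 m).Nodup := by
  rw [Q2, List.nodup_cons, List.nodup_append]
  refine ⟨?_, nodup_B2 m (le_refl m), by simp, ?_⟩
  · simp only [List.mem_append, mem_B2_inr (le_refl m)]
    simp
  · rintro x hx _ hx' rfl
    simp only [List.mem_cons, List.not_mem_nil, or_false] at hx'
    subst hx'
    rw [mem_B2_inl (le_refl m)] at hx
    simp at hx

lemma nodup_Q3 : (Q3 m).Nodup := by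
  rw [Q3, List.append_assoc, List.nodup_append]
  refine ⟨nodup_G1 trivial, ?_, ?_⟩
  · rw [List.cons_append, List.cons_append, List.nil_append, List.nodup_cons, List.nodup_cons]
    refine ⟨?_, ?_, nodup_G2 trivial⟩
    · simp only [List.mem_cons, not_or]
      refine ⟨by simp, fun hco => ?_⟩
      rw [mem_G2 (le_refl m)] at hco
      simp only [Fin.val_zero] at hco
      omega
    · exact not_mem_G2_inl
  · rintro x hx _ hx' rfl
    rcases x with c | c
    · rw [mem_G1 (le_refl m)] at hx
      simp only [List.cons_append, List.nil_append, List.mem_cons, reduceCtorEq, false_or,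
        Sum.inl.injEq] at hx'
      rcases hx' with h | h
      · subst h; simp at hx
      · exact not_mem_G2_inl h
    · exact not_mem_G1_inr hx

lemma mem_Q1 (x : Fin (m+1) ⊕ Fin (m+1)) : x ∈ Q1 m := by
  rw [Q1]
  rcases x with c | c
  · by_cases hc : c = 0
    · subst hc; simp
    · have h1 : 1 ≤ c.val := fin_pos hc
      have h2 : c.val ≤ m := by have := c.isLt; omega
      simp only [List.mem_cons, List.mem_append]
      right; left
      rw [mem_B1_inl (le_refl m)]
      omega
  · by_cases hc : c = 0
    · subst hc; simp
    · have h1 : 1 ≤ c.val := fin_pos hc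
      have h2 : c.val ≤ m := by have := c.isLt; omega
      simp only [List.mem_cons, List.mem_append]
      right; left
      rw [mem_B1_inr (le_refl m)]
      omega

lemma mem_Q2 (x : Fin (m+1) ⊕ Fin (m+1)) : x ∈ Q2 m := by
  rw [Q2]
  rcases x with c | c
  · by_cases hc : c = 0
    · subst hc; simp
    · have h1 : 1 ≤ c.val := fin_pos hc
      have h2 : c.val ≤ m := by have := c.isLt; omega
      simp only [List.mem_cons, List.mem_append]
      right; left
      rw [mem_B2_inl (le_refl m)]
      omega
  · by_cases hc : c = 0
    · subst hc; simp
    · have h1 : 1 ≤ c.val := fin_pos hc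
      have h2 : c.val ≤ m := by have := c.isLt; omega
      simp only [List.mem_cons, List.mem_append]
      right; left
      rw [mem_B2_inr (le_refl m)]
      omega

lemma mem_Q3 (x : Fin (m+1) ⊕ Fin (m+1)) : x ∈ Q3 m := by
  rw [Q3]
  rcases x with c | c
  · by_cases hc : c = 0
    · subst hc; simp
    · have h1 : 1 ≤ c.val := fin_pos hc
      have h2 : c.val ≤ m := by have := c.isLt; omega
      simp only [List.mem_append]
      left; left
      rw [mem_G1 (le_refl m)]
      omega
  · by_cases hc : c = 0
    · subst hc; simp
    · have h1 : 1 ≤ c.val := fin_pos hc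
      have h2 : c.val ≤ m := by have := c.isLt; omega
      simp only [List.mem_append]
      right
      rw [mem_G2 (le_refl m)]
      omega

end words

/-- For `m ≥ 1`, the word `q₁q₂q₃` represents the book graph `B_m` permutationally, where
`q₁ = 0′ 1 1′ 2 2′ ⋯ m m′ 0`, `q₂ = 0′ m m′ (m−1)(m−1)′ ⋯ 1 1′ 0`, and
`q₃ = 1 2 ⋯ m 0′ 0 m′ (m−1)′ ⋯ 1′`. -/
theorem book_word_represents (m : ℕ) (hm : 1 ≤ m) :
    Represents
      ((Sum.inr 0 ::
        (((List.range m).flatMap fun k =>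
          [Sum.inl ((k + 1 : ℕ) : Fin (m + 1)), Sum.inr ((k + 1 : ℕ) : Fin (m + 1))]) ++
         [Sum.inl 0])) ++
       (Sum.inr 0 ::
        (((List.range m).flatMap fun k =>
          [Sum.inl ((m - k : ℕ) : Fin (m + 1)), Sum.inr ((m - k : ℕ) : Fin (m + 1))]) ++
         [Sum.inl 0])) ++
       (((List.range m).map fun k => (Sum.inl ((k + 1 : ℕ) : Fin (m + 1)) :
          Fin (m + 1) ⊕ Fin (m + 1))) ++
        [Sum.inr 0, Sum.inl 0] ++
        ((List.range m).map fun k => Sum.inr ((m - k : ℕ) : Fin (m + 1)))))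
      (bookGraph m) := by
  intro a b hab
  show (bookGraph m).Adj a b ↔ Alternates (Q1 m ++ Q2 m ++ Q3 m) a b
  rw [alt_iff hab nodup_Q1 nodup_Q2 nodup_Q3 (mem_Q1 a) (mem_Q1 b) (mem_Q2 a) (mem_Q2 b)
    (mem_Q3 a) (mem_Q3 b)]
  simp only [Precedes]
  have h0 : ((0 : Fin (m+1)) : ℕ) = 0 := rfl
  rcases a with i | i <;> rcases b with j | j
  · -- inl i, inl j
    by_cases hi : i = 0 <;> by_cases hj : j = 0
    · subst hi; subst hj; exact absurd rfl hab
    · subst hi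
      have h1j : 1 ≤ j.val := fin_pos hj
      have h2j := j.isLt
      rw [idx1_L0, idx1_L hj, idx2_L0, idx2_L hj, idx3_L0, idx3_L hj]
      simp [bookGraph, SimpleGraph.fromRel_adj, hab, hj]
      all_goals omega
    · subst hj
      have h1i : 1 ≤ i.val := fin_pos hi
      have h2i := i.isLt
      rw [idx1_L hi, idx1_L0, idx2_L hi, idx2_L0, idx3_L hi, idx3_L0]
      simp [bookGraph, SimpleGraph.fromRel_adj, hab, hi]
      all_goals omega
    · have h1i : 1 ≤ i.val := fin_pos hi
      have h2i := i.isLt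
      have h1j : 1 ≤ j.val := fin_pos hj
      have h2j := j.isLt
      rw [idx1_L hi, idx1_L hj, idx2_L hi, idx2_L hj, idx3_L hi, idx3_L hj]
      simp [bookGraph, SimpleGraph.fromRel_adj, hab, hi, hj]
      all_goals omega
  · -- inl i, inr j
    by_cases hi : i = 0 <;> by_cases hj : j = 0
    · subst hi; subst hj
      rw [idx1_L0, idx1_R0, idx2_L0, idx2_R0, idx3_L0, idx3_R0]
      simp [bookGraph, SimpleGraph.fromRel_adj, hab]
      all_goals omega
    · subst hi
      have h1j : 1 ≤ j.val := fin_pos hj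
      have h2j := j.isLt
      rw [idx1_L0, idx1_R hj, idx2_L0, idx2_R hj, idx3_L0, idx3_R hj]
      simp [bookGraph, SimpleGraph.fromRel_adj, hab, hj, Ne.symm hj]
      all_goals omega
    · subst hj
      have h1i : 1 ≤ i.val := fin_pos hi
      have h2i := i.isLt
      rw [idx1_L hi, idx1_R0, idx2_L hi, idx2_R0, idx3_L hi, idx3_R0]
      simp [bookGraph, SimpleGraph.fromRel_adj, hab, hi, Ne.symm hi]
      all_goals omega
    · have h1i : 1 ≤ i.val := fin_pos hi
      have h2i := i.isLt
      have h1j : 1 ≤ j.val := fin_pos hj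
      have h2j := j.isLt
      rw [idx1_L hi, idx1_R hj, idx2_L hi, idx2_R hj, idx3_L hi, idx3_R hj]
      simp [bookGraph, SimpleGraph.fromRel_adj, hab, hi, hj]
      rw [Fin.ext_iff]
      all_goals omega
  · -- inr i, inl j
    by_cases hi : i = 0 <;> by_cases hj : j = 0
    · subst hi; subst hj
      rw [idx1_R0, idx1_L0, idx2_R0, idx2_L0, idx3_R0, idx3_L0]
      simp [bookGraph, SimpleGraph.fromRel_adj, hab]
      all_goals omega
    · subst hi
      have h1j : 1 ≤ j.val := fin_pos hj
      have h2j := j.isLt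
      rw [idx1_R0, idx1_L hj, idx2_R0, idx2_L hj, idx3_R0, idx3_L hj]
      simp [bookGraph, SimpleGraph.fromRel_adj, hab, hj, Ne.symm hj]
      all_goals omega
    · subst hj
      have h1i : 1 ≤ i.val := fin_pos hi
      have h2i := i.isLt
      rw [idx1_R hi, idx1_L0, idx2_R hi, idx2_L0, idx3_R hi, idx3_L0]
      simp [bookGraph, SimpleGraph.fromRel_adj, hab, hi, Ne.symm hi]
      all_goals omega
    · have h1i : 1 ≤ i.val := fin_pos hi
      have h2i := i.isLt
      have h1j : 1 ≤ j.val := fin_pos hj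
      have h2j := j.isLt
      rw [idx1_R hi, idx1_L hj, idx2_R hi, idx2_L hj, idx3_R hi, idx3_L hj]
      simp [bookGraph, SimpleGraph.fromRel_adj, hab, hi, hj]
      rw [Fin.ext_iff]
      all_goals omega
  · -- inr i, inr j
    by_cases hi : i = 0 <;> by_cases hj : j = 0
    · subst hi; subst hj; exact absurd rfl hab
    · subst hi
      have h1j : 1 ≤ j.val := fin_pos hj
      have h2j := j.isLt
      rw [idx1_R0, idx1_R hj, idx2_R0, idx2_R hj, idx3_R0, idx3_R hj]
      simp [bookGraph, SimpleGraph.fromRel_adj, hab, hj]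
      all_goals omega
    · subst hj
      have h1i : 1 ≤ i.val := fin_pos hi
      have h2i := i.isLt
      rw [idx1_R hi, idx1_R0, idx2_R hi, idx2_R0, idx3_R hi, idx3_R0]
      simp [bookGraph, SimpleGraph.fromRel_adj, hab, hi]
      all_goals omega
    · have h1i : 1 ≤ i.val := fin_pos hi
      have h2i := i.isLt
      have h1j : 1 ≤ j.val := fin_pos hj
      have h2j := j.isLt
      rw [idx1_R hi, idx1_R hj, idx2_R hi, idx2_R hj, idx3_R hi, idx3_R hj]
      simp [bookGraph, SimpleGraph.fromRel_adj, hab, hi, hj]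
      all_goals omega
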